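/- arXiv:1510.02628 — 2 statements merged into one kernel-verified Lean document; each statement's English description precedes it below -/
import Mathlib

section
/- Let n ≥ 3 and let ℛ_n be the ℚ-algebra presented by generators Y_{ij}^k, T_i^{jk}, and (T_i^{jk})⁻¹ for all triples of distinct i,j,k ∈ [n], subject to: all relations of the presentation of 𝒬_n among the Y's (namely Y_{ij}^k Y_{ji}^k = 1, Y_{ij}^k Y_{jk}^i Y_{ki}^j = 1 for distinct i,j,k; Y_{ij}^ℓ Y_{jk}^ℓ Y_{ki}^ℓ = 1 for distinct i,j,k,ℓ; Y_{iℓ}^j = Y_{ij}^k Y_{jℓ}^i + Y_{iℓ}^k for cyclic (i,j,k,ℓ)); the invertibility relations T_i^{jk}·(T_i^{jk})⁻¹ = (T_i^{jk})⁻¹·T_i^{jk} = 1; (i) T_i^{jk} = T_i^{kj} for all distinct i,j,k; (ii) T_i^{jℓ} = T_i^{jk} + T_i^{kℓ} for all cyclic quadruples (i,j,k,ℓ); (iii) Y_{ji}^k T_i^{jk} = Y_{ji}^ℓ T_i^{jℓ} for all distinct i,j,k,ℓ. Then the assignments Y_{ij}^k ↦ x_{ki}⁻¹x_{kj} and T_i^{jk}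 ↦ x_{ji}⁻¹x_{jk}x_{ik}⁻¹ define a ℚ-algebra isomorphism from ℛ_n onto 𝒜_n. -/
open scoped Classical

noncomputable section

namespace NCPolygon

/-- Cyclic successor on `Fin n` (the vertices of the `n`-gon in cyclic order). -/
def csucc {n : ℕ} (i : Fin n) : Fin n :=
  ⟨(i.1 + 1) % n, Nat.mod_lt _ (Nat.lt_of_le_of_lt (Nat.zero_le _) i.isLt)⟩

/-- Cyclic predecessor on `Fin n`. -/
def cpred {n : ℕ} (i : Fin n) : Fin n :=
  ⟨(i.1 + (n - 1)) % n, Nat.mod_lt _ (Nat.lt_of_le_of_lt (Nat.zero_le _) i.isLt)⟩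

/-- A list of elements of `Fin n` is *cyclic* if its entries are distinct and some
cyclic rotation of it is strictly increasing. -/
def IsCyclicSeq {n : ℕ} (l : List (Fin n)) : Prop :=
  l.Nodup ∧ ∃ k : ℕ, (l.rotate k).Pairwise (· < ·)

/-- The pair `(i,k)` crosses `(j,l)` iff `(i,j,k,l)` is cyclic. -/
def Crosses {n : ℕ} (p q : Fin n × Fin n) : Prop :=
  IsCyclicSeq [p.1, q.1, p.2, q.2]

def NonCrossing {n : ℕ} (Δ : Set (Fin n × Fin n)) : Prop :=
  (∀ p ∈ Δ, p.1 ≠ p.2) ∧ ∀ p ∈ Δ, ∀ q ∈ Δ, ¬ Crosses p q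

/-- A triangulation of the `n`-gon: a maximal crossing-free set of (directed) chords. -/
def IsTriangulation {n : ℕ} (Δ : Set (Fin n × Fin n)) : Prop :=
  NonCrossing Δ ∧ ∀ Δ' : Set (Fin n × Fin n), NonCrossing Δ' → Δ ⊆ Δ' → Δ' = Δ

/-! ### The noncommutative polygon algebra `𝒜_n` -/

abbrev OffD (n : ℕ) := {p : Fin n × Fin n // p.1 ≠ p.2}

abbrev AGen (n : ℕ) := OffD n ⊕ OffD n

def xF {n : ℕ} (i j : Fin n) : FreeAlgebra ℚ (AGen n) :=
  if h : i ≠ j then FreeAlgebra.ι ℚ (Sum.inl ⟨(i, j), h⟩) else 1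

def xiF {n : ℕ} (i j : Fin n) : FreeAlgebra ℚ (AGen n) :=
  if h : i ≠ j then FreeAlgebra.ι ℚ (Sum.inr ⟨(i, j), h⟩) else 1

/-- The defining relations of `𝒜_n`: invertibility, triangle, and exchange relations. -/
inductive ARel (n : ℕ) : FreeAlgebra ℚ (AGen n) → FreeAlgebra ℚ (AGen n) → Prop
  | mul_inv {i j : Fin n} (h : i ≠ j) : ARel n (xF i j * xiF i j) 1
  | inv_mul {i j : Fin n} (h : i ≠ j) : ARel n (xiF i j * xF i j) 1
  | triangle {i j k : Fin n} (hij : i ≠ j) (hik : i ≠ k) (hjk : j ≠ k) :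
      ARel n (xF i j * xiF k j * xF k i) (xF i k * xiF j k * xF j i)
  | exchange {i j k l : Fin n} (h : IsCyclicSeq [i, j, k, l]) :
      ARel n (xF j l) (xF j k * xiF i k * xF i l + xF j i * xiF k i * xF k l)

/-- The noncommutative `n`-gon algebra `𝒜_n`. -/
abbrev NCPoly (n : ℕ) := RingQuot (ARel n)

/-- The generator `x_{ij} ∈ 𝒜_n` (junk value `1` when `i = j`). -/
def X {n : ℕ} (i j : Fin n) : NCPoly n :=
  RingQuot.mkAlgHom ℚ (ARel n) (xF i j)

/-- The generator `x_{ij}⁻¹ ∈ 𝒜_n`. -/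
def Xinv {n : ℕ} (i j : Fin n) : NCPoly n :=
  RingQuot.mkAlgHom ℚ (ARel n) (xiF i j)

/-- The noncommutative angle `T_i^{jk} = x_{ji}⁻¹ x_{jk} x_{ik}⁻¹ ∈ 𝒜_n`. -/
def Tang {n : ℕ} (i j k : Fin n) : NCPoly n := Xinv j i * X j k * Xinv i k

/-! ### Triangle groups -/

def tF {n : ℕ} (Δ : Set (Fin n × Fin n)) (i j : Fin n) : FreeGroup Δ :=
  if h : (i, j) ∈ Δ then FreeGroup.of (⟨(i, j), h⟩ : Δ) else 1

/-- The triangle relations of the triangle group `𝕋_Δ`. -/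
def triRels {n : ℕ} (Δ : Set (Fin n × Fin n)) : Set (FreeGroup Δ) :=
  { w | ∃ i j k : Fin n, i ≠ j ∧ i ≠ k ∧ j ≠ k ∧
      (i, j) ∈ Δ ∧ (j, i) ∈ Δ ∧ (i, k) ∈ Δ ∧ (k, i) ∈ Δ ∧ (j, k) ∈ Δ ∧ (k, j) ∈ Δ ∧
      w = tF Δ i j * (tF Δ k j)⁻¹ * tF Δ k i *
        (tF Δ i k * (tF Δ j k)⁻¹ * tF Δ j i)⁻¹ }

/-- The triangle group `𝕋_Δ` of a triangulation `Δ`. -/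
abbrev TriGroup {n : ℕ} (Δ : Set (Fin n × Fin n)) := PresentedGroup (triRels Δ)

/-- The generator `t_{ij} ∈ 𝕋_Δ` (junk value `1` when `(i,j) ∉ Δ`). -/
def tG {n : ℕ} (Δ : Set (Fin n × Fin n)) (i j : Fin n) : TriGroup Δ :=
  if h : (i, j) ∈ Δ then PresentedGroup.of (rels := triRels Δ) ⟨(i, j), h⟩ else 1

/-! ### The big triangle group `𝕋_n` -/

def btF {n : ℕ} (i j : Fin n) : FreeGroup (OffD n) :=
  if h : i ≠ j then FreeGroup.of (⟨(i, j), h⟩ : OffD n) else 1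

def bigRels (n : ℕ) : Set (FreeGroup (OffD n)) :=
  { w | ∃ i j k : Fin n, i ≠ j ∧ i ≠ k ∧ j ≠ k ∧
      w = btF i j * (btF k j)⁻¹ * btF k i * (btF i k * (btF j k)⁻¹ * btF j i)⁻¹ }

/-- The big triangle group `𝕋_n`. -/
abbrev BigTriGroup (n : ℕ) := PresentedGroup (bigRels n)

/-- The generator `t_{ij} ∈ 𝕋_n`. -/
def bigT {n : ℕ} (i j : Fin n) : BigTriGroup n :=
  if h : i ≠ j then PresentedGroup.of (rels := bigRels n) ⟨(i, j), h⟩ else 1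

/-! ### Distinguished subalgebras and subgroups -/

/-- `𝒜_Δ`: the subalgebra of `𝒜_n` generated by all `x_{ij}` together with the
`x_{ij}⁻¹` for `(i,j) ∈ Δ`. -/
def ADelta (n : ℕ) (Δ : Set (Fin n × Fin n)) : Subalgebra ℚ (NCPoly n) :=
  Algebra.adjoin ℚ
    ({a | ∃ i j : Fin n, i ≠ j ∧ a = X i j} ∪ {a | ∃ p ∈ Δ, a = Xinv p.1 p.2})

/-- `𝒬_n`: the subalgebra of `𝒜_n` generated by the `y_{ij}^k = x_{ki}⁻¹ x_{kj}`. -/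
def Qn (n : ℕ) : Subalgebra ℚ (NCPoly n) :=
  Algebra.adjoin ℚ
    {a : NCPoly n | ∃ i j k : Fin n, i ≠ j ∧ i ≠ k ∧ j ≠ k ∧ a = Xinv k i * X k j}

/-- `𝕌_Δ`: the subgroup of `𝕋_Δ` generated by the `u_{ij}^k = t_{ki}⁻¹ t_{kj}`. -/
def UDelta {n : ℕ} (Δ : Set (Fin n × Fin n)) : Subgroup (TriGroup Δ) :=
  Subgroup.closure
    {g | ∃ i j k : Fin n, (k, i) ∈ Δ ∧ (k, j) ∈ Δ ∧ g = (tG Δ k i)⁻¹ * tG Δ k j}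


/-- Triples of pairwise distinct indices. -/
abbrev Tri (n : ℕ) := {t : Fin n × Fin n × Fin n // t.1 ≠ t.2.1 ∧ t.1 ≠ t.2.2 ∧ t.2.1 ≠ t.2.2}

/-- Generators of `ℛ_n`: the `Y`'s, the `T`'s and the `T⁻¹`'s. -/
abbrev RGen (n : ℕ) := Tri n ⊕ Tri n ⊕ Tri n

def yR {n : ℕ} (i j k : Fin n) : FreeAlgebra ℚ (RGen n) :=
  if h : i ≠ j ∧ i ≠ k ∧ j ≠ k then FreeAlgebra.ι ℚ (Sum.inl ⟨(i, j, k), h⟩) else 1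

/-- The generator `T_i^{jk}` (as the triple `(i,j,k)`). -/
def tR {n : ℕ} (i j k : Fin n) : FreeAlgebra ℚ (RGen n) :=
  if h : i ≠ j ∧ i ≠ k ∧ j ≠ k then FreeAlgebra.ι ℚ (Sum.inr (Sum.inl ⟨(i, j, k), h⟩)) else 1

/-- The generator `(T_i^{jk})⁻¹`. -/
def tiR {n : ℕ} (i j k : Fin n) : FreeAlgebra ℚ (RGen n) :=
  if h : i ≠ j ∧ i ≠ k ∧ j ≠ k then FreeAlgebra.ι ℚ (Sum.inr (Sum.inr ⟨(i, j, k), h⟩)) else 1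

/-- The defining relations of `ℛ_n`. -/
inductive RRel (n : ℕ) : FreeAlgebra ℚ (RGen n) → FreeAlgebra ℚ (RGen n) → Prop
  | yInvol {i j k : Fin n} (h : i ≠ j ∧ i ≠ k ∧ j ≠ k) : RRel n (yR i j k * yR j i k) 1
  | yTri3 {i j k : Fin n} (h : i ≠ j ∧ i ≠ k ∧ j ≠ k) :
      RRel n (yR i j k * yR j k i * yR k i j) 1
  | yTri4 {i j k l : Fin n} (h : [i, j, k, l].Nodup) :
      RRel n (yR i j l * yR j k l * yR k i l) 1
  | yExch {i j k l : Fin n} (h : IsCyclicSeq [i, j, k, l]) :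
      RRel n (yR i l j) (yR i j k * yR j l i + yR i l k)
  | tMulInv {i j k : Fin n} (h : i ≠ j ∧ i ≠ k ∧ j ≠ k) : RRel n (tR i j k * tiR i j k) 1
  | tInvMul {i j k : Fin n} (h : i ≠ j ∧ i ≠ k ∧ j ≠ k) : RRel n (tiR i j k * tR i j k) 1
  | tSymm {i j k : Fin n} (h : i ≠ j ∧ i ≠ k ∧ j ≠ k) : RRel n (tR i j k) (tR i k j)
  | tAdd {i j k l : Fin n} (h : IsCyclicSeq [i, j, k, l]) :
      RRel n (tR i j l) (tR i j k + tR i k l)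
  | consist {i j k l : Fin n} (h : [i, j, k, l].Nodup) :
      RRel n (yR j i k * tR i j k) (yR j i l * tR i j l)


/-! ### Auxiliary development for Statement 9 -/

section Aux

variable {n : ℕ}

private lemma cl {M : Type*} [Monoid M] {a b : M} (h : a * b = 1) (y : M) :
    a * (b * y) = y := by rw [← mul_assoc, h, one_mul]

lemma nodup4_iff {i j k l : Fin n} : ([i,j,k,l] : List (Fin n)).Nodup ↔
    (i ≠ j ∧ i ≠ k ∧ i ≠ l ∧ j ≠ k ∧ j ≠ l ∧ k ≠ l) := by
  simp [List.nodup_cons, not_or, and_assoc]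

lemma exists_third (hn : 3 ≤ n) (a b : Fin n) : ∃ c : Fin n, c ≠ a ∧ c ≠ b := by
  by_contra hc
  push_neg at hc
  have key : ∀ x y : Fin n, x ≠ y → x ≠ a → y ≠ a → False := fun x y hxy hxa hya =>
    hxy ((hc x hxa).trans (hc y hya).symm)
  have d01 : (⟨0, by omega⟩ : Fin n) ≠ ⟨1, by omega⟩ := by simp [Fin.ext_iff]
  have d02 : (⟨0, by omega⟩ : Fin n) ≠ ⟨2, by omega⟩ := by simp [Fin.ext_iff]
  have d12 : (⟨1, by omega⟩ : Fin n) ≠ ⟨2, by omega⟩ := by simp [Fin.ext_iff]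
  by_cases ha0 : (⟨0, by omega⟩ : Fin n) = a
  · by_cases ha1 : (⟨1, by omega⟩ : Fin n) = a
    · exact d01 (ha0.trans ha1.symm)
    · exact key ⟨1, by omega⟩ ⟨2, by omega⟩ d12 ha1 (fun h => d02 (ha0.trans h.symm))
  · by_cases ha1 : (⟨1, by omega⟩ : Fin n) = a
    · exact key ⟨0, by omega⟩ ⟨2, by omega⟩ d02 ha0 (fun h => d12 (ha1.trans h.symm))
    · exact key ⟨0, by omega⟩ ⟨1, by omega⟩ d01 ha0 ha1

/-! #### The `𝒜_n` side -/

lemma XXi {i j : Fin n} (h : i ≠ j) : X i j * Xinv i j = 1 := by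
  have w := RingQuot.mkAlgHom_rel ℚ (ARel.mul_inv h)
  unfold X Xinv
  simpa only [map_mul, map_one] using w

lemma XiX {i j : Fin n} (h : i ≠ j) : Xinv i j * X i j = 1 := by
  have w := RingQuot.mkAlgHom_rel ℚ (ARel.inv_mul h)
  unfold X Xinv
  simpa only [map_mul, map_one] using w

lemma Xtri {i j k : Fin n} (hij : i ≠ j) (hik : i ≠ k) (hjk : j ≠ k) :
    X i j * (Xinv k j * X k i) = X i k * (Xinv j k * X j i) := by
  have w := RingQuot.mkAlgHom_rel ℚ (ARel.triangle hij hik hjk)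
  unfold X Xinv
  simpa only [map_mul, mul_assoc] using w

lemma Xexch {i j k l : Fin n} (h : IsCyclicSeq [i, j, k, l]) :
    X j l = X j k * (Xinv i k * X i l) + X j i * (Xinv k i * X k l) := by
  have w := RingQuot.mkAlgHom_rel ℚ (ARel.exchange h)
  unfold X Xinv
  simpa only [map_mul, map_add, mul_assoc] using w

lemma Xconj {i j k : Fin n} (hij : i ≠ j) (hik : i ≠ k) (hjk : j ≠ k) :
    Xinv j i * (X j k * Xinv i k) = Xinv k i * (X k j * Xinv i j) := by
  have t : X j i * (Xinv k i * X k j) = X j k * (Xinv i k * X i j) :=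
    Xtri hij.symm hjk hik
  have t2 := congrArg (· * Xinv i j) t
  simp only [mul_assoc] at t2
  calc Xinv j i * (X j k * Xinv i k)
      = Xinv j i * (X j k * (Xinv i k * (X i j * Xinv i j))) := by
        rw [XXi hij, mul_one]
    _ = Xinv j i * (X j i * (Xinv k i * (X k j * Xinv i j))) := by rw [← t2]
    _ = Xinv k i * (X k j * Xinv i j) := cl (XiX hij.symm) _

lemma consist_aux {i j k : Fin n} (hij : i ≠ j) (hik : i ≠ k) (hjk : j ≠ k) :
    Xinv k j * (X k i * (Xinv j i * (X j k * Xinv i k))) = Xinv i j := by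
  rw [Xconj hij hik hjk, cl (XXi hik.symm), cl (XiX hjk.symm)]

lemma NX1 {i j t : Fin n} (hij : i ≠ j) (hti : t ≠ i) (htj : t ≠ j) :
    (X i t * (Xinv j t * X j i)) * (Xinv t i * X t j) = X i j := by
  simp only [mul_assoc]
  rw [Xtri hij.symm htj.symm hti.symm, cl (XiX htj.symm), cl (XXi hti.symm)]

lemma NX2 {i j t : Fin n} (hij : i ≠ j) (hti : t ≠ i) (htj : t ≠ j) :
    (Xinv t j * X t i) * (Xinv j i * (X j t * Xinv i t)) = Xinv i j := by
  rw [Xconj hij hti.symm htj.symm]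
  simp only [mul_assoc]
  rw [cl (XXi hti), cl (XiX htj)]

/-- The images of the generators of `ℛ_n`. -/
def fgen : RGen n → NCPoly n :=
  Sum.elim (fun t => Xinv t.1.2.2 t.1.1 * X t.1.2.2 t.1.2.1)
    (Sum.elim (fun t => Xinv t.1.2.1 t.1.1 * (X t.1.2.1 t.1.2.2 * Xinv t.1.1 t.1.2.2))
      (fun t => X t.1.1 t.1.2.2 * (Xinv t.1.2.1 t.1.2.2 * X t.1.2.1 t.1.1)))

def Fhom : FreeAlgebra ℚ (RGen n) →ₐ[ℚ] NCPoly n := FreeAlgebra.lift ℚ fgen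

lemma Fy {i j k : Fin n} (h1 : i ≠ j) (h2 : i ≠ k) (h3 : j ≠ k) :
    Fhom (yR i j k) = Xinv k i * X k j := by
  rw [yR, dif_pos ⟨h1, h2, h3⟩]
  simp [Fhom, fgen]

lemma Ft {i j k : Fin n} (h1 : i ≠ j) (h2 : i ≠ k) (h3 : j ≠ k) :
    Fhom (tR i j k) = Xinv j i * (X j k * Xinv i k) := by
  rw [tR, dif_pos ⟨h1, h2, h3⟩]
  simp [Fhom, fgen]

lemma Fti {i j k : Fin n} (h1 : i ≠ j) (h2 : i ≠ k) (h3 : j ≠ k) :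
    Fhom (tiR i j k) = X i k * (Xinv j k * X j i) := by
  rw [tiR, dif_pos ⟨h1, h2, h3⟩]
  simp [Fhom, fgen]

lemma Frespect : ∀ ⦃x y : FreeAlgebra ℚ (RGen n)⦄, RRel n x y → Fhom x = Fhom y := by
  intro x y h
  cases h with
  | @yInvol i j k h =>
    obtain ⟨h1, h2, h3⟩ := h
    rw [map_mul, map_one, Fy h1 h2 h3, Fy h1.symm h3 h2]
    rw [mul_assoc, cl (XXi h3.symm)]
    exact XiX h2.symm
  | @yTri3 i j k h =>
    obtain ⟨h1, h2, h3⟩ := h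
    rw [map_mul, map_mul, map_one, Fy h1 h2 h3, Fy h3 h1.symm h2.symm,
      Fy h2.symm h3.symm h1]
    have t : X k j * (Xinv i j * X i k) = X k i * (Xinv j i * X j k) :=
      Xtri h3.symm h2.symm h1.symm
    have t2 := congrArg (· * (Xinv j k * X j i)) t
    simp only [mul_assoc] at t2 ⊢
    rw [t2, cl (XXi h3), XiX h1.symm, mul_one]
    exact XiX h2.symm
  | @yTri4 i j k l h =>
    obtain ⟨hij, hik, hil, hjk, hjl, hkl⟩ := nodup4_iff.mp h
    rw [map_mul, map_mul, map_one, Fy hij hil hjl, Fy hjk hjl hkl,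
      Fy hik.symm hkl hil]
    simp only [mul_assoc]
    rw [cl (XXi hjl.symm), cl (XXi hkl.symm)]
    exact XiX hil.symm
  | @yExch i j k l h =>
    obtain ⟨hij, hik, hil, hjk, hjl, hkl⟩ := nodup4_iff.mp h.1
    rw [map_add, map_mul, Fy hil hij hjl.symm, Fy hij hik hjk,
      Fy hjl hij.symm hil.symm, Fy hil hik hkl.symm]
    have t2 := congrArg (· * X i l) (Xconj hij hik hjk)
    simp only [mul_assoc] at t2
    calc Xinv j i * X j l
        = Xinv j i * (X j k * (Xinv i k * X i l) + X j i * (Xinv k i * X k l)) := by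
          rw [Xexch h]
      _ = Xinv j i * (X j k * (Xinv i k * X i l))
            + Xinv j i * (X j i * (Xinv k i * X k l)) := mul_add _ _ _
      _ = Xinv k i * (X k j * (Xinv i j * X i l)) + Xinv k i * X k l := by
          rw [t2, cl (XiX hij.symm)]
      _ = Xinv k i * X k j * (Xinv i j * X i l) + Xinv k i * X k l := by
          rw [← mul_assoc]
  | @tMulInv i j k h =>
    obtain ⟨h1, h2, h3⟩ := h
    rw [map_mul, map_one, Ft h1 h2 h3, Fti h1 h2 h3]
    simp only [mul_assoc]
    rw [cl (XiX h2), cl (XXi h3)]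
    exact XiX h1.symm
  | @tInvMul i j k h =>
    obtain ⟨h1, h2, h3⟩ := h
    rw [map_mul, map_one, Fti h1 h2 h3, Ft h1 h2 h3]
    simp only [mul_assoc]
    rw [cl (XXi h1.symm), cl (XiX h3)]
    exact XXi h2
  | @tSymm i j k h =>
    obtain ⟨h1, h2, h3⟩ := h
    rw [Ft h1 h2 h3, Ft h2 h1 h3.symm]
    exact Xconj h1 h2 h3
  | @tAdd i j k l h =>
    obtain ⟨hij, hik, hil, hjk, hjl, hkl⟩ := nodup4_iff.mp h.1
    rw [map_add, Ft hij hil hjl, Ft hij hik hjk, Ft hik hil hkl]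
    rw [Xexch h, add_mul]
    simp only [mul_assoc]
    rw [XXi hil, mul_one, mul_add, cl (XiX hij.symm)]
  | @consist i j k l h =>
    obtain ⟨hij, hik, hil, hjk, hjl, hkl⟩ := nodup4_iff.mp h
    rw [map_mul, map_mul, Fy hij.symm hjk hik, Ft hij hik hjk,
      Fy hij.symm hjl hil, Ft hij hil hjl]
    simp only [mul_assoc]
    rw [consist_aux hij hik hjk, consist_aux hij hil hjl]

/-! #### The `ℛ_n` side -/

def YQ (i j k : Fin n) : RingQuot (RRel n) := RingQuot.mkAlgHom ℚ (RRel n) (yR i j k)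

def TQ (i j k : Fin n) : RingQuot (RRel n) := RingQuot.mkAlgHom ℚ (RRel n) (tR i j k)

def TiQ (i j k : Fin n) : RingQuot (RRel n) := RingQuot.mkAlgHom ℚ (RRel n) (tiR i j k)

lemma qYinv (i j k : Fin n) (h1 : i ≠ j) (h2 : i ≠ k) (h3 : j ≠ k) :
    YQ i j k * YQ j i k = 1 := by
  have w := RingQuot.mkAlgHom_rel ℚ (RRel.yInvol (n := n) ⟨h1, h2, h3⟩)
  unfold YQ
  simpa only [map_mul, map_one] using w

lemma qTri3 {i j k : Fin n} (h1 : i ≠ j) (h2 : i ≠ k) (h3 : j ≠ k) :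
    YQ i j k * YQ j k i * YQ k i j = 1 := by
  have w := RingQuot.mkAlgHom_rel ℚ (RRel.yTri3 (n := n) ⟨h1, h2, h3⟩)
  unfold YQ
  simpa only [map_mul, map_one] using w

lemma qTri4 {i j k l : Fin n} (h : ([i,j,k,l] : List (Fin n)).Nodup) :
    YQ i j l * YQ j k l * YQ k i l = 1 := by
  have w := RingQuot.mkAlgHom_rel ℚ (RRel.yTri4 (n := n) h)
  unfold YQ
  simpa only [map_mul, map_one] using w

lemma qExch {i j k l : Fin n} (h : IsCyclicSeq [i, j, k, l]) :
    YQ i l j = YQ i j k * YQ j l i + YQ i l k := by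
  have w := RingQuot.mkAlgHom_rel ℚ (RRel.yExch (n := n) h)
  unfold YQ
  simpa only [map_mul, map_add] using w

lemma qTTi {i j k : Fin n} (h1 : i ≠ j) (h2 : i ≠ k) (h3 : j ≠ k) :
    TQ i j k * TiQ i j k = 1 := by
  have w := RingQuot.mkAlgHom_rel ℚ (RRel.tMulInv (n := n) ⟨h1, h2, h3⟩)
  unfold TQ TiQ
  simpa only [map_mul, map_one] using w

lemma qTiT {i j k : Fin n} (h1 : i ≠ j) (h2 : i ≠ k) (h3 : j ≠ k) :
    TiQ i j k * TQ i j k = 1 := by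
  have w := RingQuot.mkAlgHom_rel ℚ (RRel.tInvMul (n := n) ⟨h1, h2, h3⟩)
  unfold TQ TiQ
  simpa only [map_mul, map_one] using w

lemma qTsymm {i j k : Fin n} (h1 : i ≠ j) (h2 : i ≠ k) (h3 : j ≠ k) :
    TQ i j k = TQ i k j :=
  RingQuot.mkAlgHom_rel ℚ (RRel.tSymm (n := n) ⟨h1, h2, h3⟩)

lemma qConsist {i j k l : Fin n} (h : ([i,j,k,l] : List (Fin n)).Nodup) :
    YQ j i k * TQ i j k = YQ j i l * TQ i j l := by
  have w := RingQuot.mkAlgHom_rel ℚ (RRel.consist (n := n) h)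
  unfold YQ TQ
  simpa only [map_mul] using w

lemma qTisymm {i j k : Fin n} (h1 : i ≠ j) (h2 : i ≠ k) (h3 : j ≠ k) :
    TiQ i j k = TiQ i k j :=
  left_inv_eq_right_inv (qTiT h1 h2 h3)
    (by rw [qTsymm h1 h2 h3]; exact qTTi h2 h1 h3.symm)

lemma qD1 {a b c : Fin n} (h1 : a ≠ b) (h2 : a ≠ c) (h3 : b ≠ c) :
    YQ b a c * YQ a c b = YQ b c a :=
  left_inv_eq_right_inv (qTri3 h1.symm h3 h2)
    (qYinv c b a h3.symm h2.symm h1.symm)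

lemma qD3 {a b c d : Fin n} (h : ([a,b,c,d] : List (Fin n)).Nodup) :
    YQ a b d * YQ b c d = YQ a c d := by
  obtain ⟨hab, hac, had, hbc, hbd, hcd⟩ := nodup4_iff.mp h
  exact left_inv_eq_right_inv (qTri4 h) (qYinv c a d hac.symm hcd had)

/-- A choice of a vertex distinct from `a` and `b`. -/
def thrd (hn : 3 ≤ n) (a b : Fin n) : Fin n := (exists_third hn a b).choose

lemma thrd_ne_left (hn : 3 ≤ n) (a b : Fin n) : thrd hn a b ≠ a :=
  (exists_third hn a b).choose_spec.1

lemma thrd_ne_right (hn : 3 ≤ n) (a b : Fin n) : thrd hn a b ≠ b :=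
  (exists_third hn a b).choose_spec.2

/-- The image of `x_{ab}` in `ℛ_n`. -/
def XQ (hn : 3 ≤ n) (a b : Fin n) : RingQuot (RRel n) :=
  TiQ a b (thrd hn a b) * YQ a b (thrd hn a b)

/-- The image of `x_{ab}⁻¹` in `ℛ_n`. -/
def XQI (hn : 3 ≤ n) (a b : Fin n) : RingQuot (RRel n) :=
  YQ b a (thrd hn a b) * TQ a b (thrd hn a b)

lemma XQI_eq (hn : 3 ≤ n) {a b c : Fin n} (hab : a ≠ b) (hca : c ≠ a) (hcb : c ≠ b) :
    XQI hn a b = YQ b a c * TQ a b c := by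
  by_cases hc : c = thrd hn a b
  · subst hc; rfl
  · have hta := thrd_ne_left hn a b
    have htb := thrd_ne_right hn a b
    have hnd : ([a, b, thrd hn a b, c] : List (Fin n)).Nodup :=
      nodup4_iff.mpr ⟨hab, hta.symm, hca.symm, htb.symm, hcb.symm,
        fun hh => hc hh.symm⟩
    exact qConsist hnd

lemma XQ_XQI (hn : 3 ≤ n) {a b : Fin n} (hab : a ≠ b) :
    XQ hn a b * XQI hn a b = 1 := by
  have hta := thrd_ne_left hn a b
  have htb := thrd_ne_right hn a b
  unfold XQ XQI
  simp only [mul_assoc]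
  rw [cl (qYinv a b _ hab hta.symm htb.symm)]
  exact qTiT hab hta.symm htb.symm

lemma XQI_XQ (hn : 3 ≤ n) {a b : Fin n} (hab : a ≠ b) :
    XQI hn a b * XQ hn a b = 1 := by
  have hta := thrd_ne_left hn a b
  have htb := thrd_ne_right hn a b
  unfold XQ XQI
  simp only [mul_assoc]
  rw [cl (qTTi hab hta.symm htb.symm)]
  exact qYinv b a _ hab.symm htb.symm hta.symm

lemma XQ_eq (hn : 3 ≤ n) {a b c : Fin n} (hab : a ≠ b) (hca : c ≠ a) (hcb : c ≠ b) :
    XQ hn a b = TiQ a b c * YQ a b c := by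
  refine left_inv_eq_right_inv (XQ_XQI hn hab) ?_
  rw [XQI_eq hn hab hca hcb]
  simp only [mul_assoc]
  rw [cl (qTTi hab hca.symm hcb.symm)]
  exact qYinv b a c hab.symm hcb.symm hca.symm

lemma qB1 (hn : 3 ≤ n) {a b c : Fin n} (hab : a ≠ b) (hac : a ≠ c) (hbc : b ≠ c) :
    XQI hn a b * XQ hn a c = YQ b c a := by
  rw [XQI_eq hn hab hac.symm hbc.symm, XQ_eq hn hac hab.symm hbc,
    qTsymm hab hac hbc]
  simp only [mul_assoc]
  rw [cl (qTTi hac hab hbc.symm)]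
  exact qD1 hab hac hbc

lemma qBtri (hn : 3 ≤ n) {i j k : Fin n} (hij : i ≠ j) (hik : i ≠ k) (hjk : j ≠ k) :
    XQ hn i j * (XQI hn k j * XQ hn k i) = TiQ i j k := by
  rw [XQ_eq hn hij hik.symm hjk.symm, XQI_eq hn hjk.symm hik hij,
    XQ_eq hn hik.symm hjk hij.symm, qTsymm hjk.symm hik.symm hij.symm]
  simp only [mul_assoc]
  rw [cl (qTTi hik.symm hjk.symm hij)]
  have u : YQ i j k * (YQ j k i * YQ k i j) = 1 := by
    simpa only [mul_assoc] using qTri3 hij hik hjk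
  rw [u, mul_one]

lemma qBexp (hn : 3 ≤ n) {a b c : Fin n} (hab : a ≠ b) (hac : a ≠ c) (hbc : b ≠ c) :
    XQ hn a c = XQ hn a b * YQ b c a := by
  calc XQ hn a c = (XQ hn a b * XQI hn a b) * XQ hn a c := by
        rw [XQ_XQI hn hab, one_mul]
    _ = XQ hn a b * (XQI hn a b * XQ hn a c) := mul_assoc _ _ _
    _ = XQ hn a b * YQ b c a := by rw [qB1 hn hab hac hbc]

lemma qYexch2 {i j k l : Fin n} (h : IsCyclicSeq [i, j, k, l]) :
    YQ i l j = YQ i k j * YQ k l i + YQ i l k := by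
  obtain ⟨hij, hik, hil, hjk, hjl, hkl⟩ := nodup4_iff.mp h.1
  have e1 : YQ i k j * YQ k j i = YQ i j k := qD1 hik.symm hjk.symm hij
  have e2 : YQ k j i * YQ j l i = YQ k l i :=
    qD3 (nodup4_iff.mpr ⟨hjk.symm, hkl, hik.symm, hjl, hij.symm, hil.symm⟩)
  calc YQ i l j = YQ i j k * YQ j l i + YQ i l k := qExch h
    _ = (YQ i k j * YQ k j i) * YQ j l i + YQ i l k := by rw [e1]
    _ = YQ i k j * (YQ k j i * YQ j l i) + YQ i l k := by rw [mul_assoc]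
    _ = YQ i k j * YQ k l i + YQ i l k := by rw [e2]

def ggen (hn : 3 ≤ n) : AGen n → RingQuot (RRel n) :=
  Sum.elim (fun p => XQ hn p.1.1 p.1.2) (fun p => XQI hn p.1.1 p.1.2)

def Ghom (hn : 3 ≤ n) : FreeAlgebra ℚ (AGen n) →ₐ[ℚ] RingQuot (RRel n) :=
  FreeAlgebra.lift ℚ (ggen hn)

lemma Gx (hn : 3 ≤ n) {i j : Fin n} (h : i ≠ j) : Ghom hn (xF i j) = XQ hn i j := by
  rw [xF, dif_pos h]
  simp [Ghom, ggen]

lemma Gxi (hn : 3 ≤ n) {i j : Fin n} (h : i ≠ j) : Ghom hn (xiF i j) = XQI hn i j := by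
  rw [xiF, dif_pos h]
  simp [Ghom, ggen]

lemma Grespect (hn : 3 ≤ n) :
    ∀ ⦃x y : FreeAlgebra ℚ (AGen n)⦄, ARel n x y → Ghom hn x = Ghom hn y := by
  intro x y h
  cases h with
  | @mul_inv i j h =>
    rw [map_mul, map_one, Gx hn h, Gxi hn h]
    exact XQ_XQI hn h
  | @inv_mul i j h =>
    rw [map_mul, map_one, Gx hn h, Gxi hn h]
    exact XQI_XQ hn h
  | @triangle i j k hij hik hjk =>
    rw [map_mul, map_mul, map_mul, map_mul, Gx hn hij, Gxi hn hjk.symm,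
      Gx hn hik.symm, Gx hn hik, Gxi hn hjk, Gx hn hij.symm]
    rw [mul_assoc, mul_assoc, qBtri hn hij hik hjk, qBtri hn hik hij hjk.symm]
    exact qTisymm hij hik hjk
  | @exchange i j k l h =>
    obtain ⟨hij, hik, hil, hjk, hjl, hkl⟩ := nodup4_iff.mp h.1
    rw [map_add, map_mul, map_mul, map_mul, map_mul, Gx hn hjl, Gx hn hjk,
      Gxi hn hik, Gx hn hil, Gx hn hij.symm, Gxi hn hik.symm, Gx hn hkl]
    rw [mul_assoc, mul_assoc, qB1 hn hik hil hkl, qB1 hn hik.symm hkl hil,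
      qBexp hn hij.symm hjk hik, qBexp hn hij.symm hjl hil]
    rw [mul_assoc, ← mul_add, ← qYexch2 h]

end Aux

/-- The assignments `Y_{ij}^k ↦ x_{ki}⁻¹ x_{kj}`,
`T_i^{jk} ↦ x_{ji}⁻¹ x_{jk} x_{ik}⁻¹` define an algebra isomorphism `ℛ_n ≅ 𝒜_n`. -/
theorem presented_An (n : ℕ) (hn : 3 ≤ n) :
    ∃ f : RingQuot (RRel n) →ₐ[ℚ] NCPoly n,
      (∀ i j k : Fin n, i ≠ j → i ≠ k → j ≠ k →
        f (RingQuot.mkAlgHom ℚ (RRel n) (yR i j k)) = Xinv k i * X k j ∧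
        f (RingQuot.mkAlgHom ℚ (RRel n) (tR i j k)) = Xinv j i * X j k * Xinv i k) ∧
      Function.Bijective f := by
  let f : RingQuot (RRel n) →ₐ[ℚ] NCPoly n :=
    (RingQuot.liftAlgHom ℚ) ⟨Fhom, Frespect⟩
  let g : NCPoly n →ₐ[ℚ] RingQuot (RRel n) :=
    (RingQuot.liftAlgHom ℚ) ⟨Ghom hn, Grespect hn⟩
  have fmk : ∀ x, f (RingQuot.mkAlgHom ℚ (RRel n) x) = Fhom x := fun x =>
    RingQuot.liftAlgHom_mkAlgHom_apply ℚ Fhom Frespect x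
  have gmk : ∀ x, g (RingQuot.mkAlgHom ℚ (ARel n) x) = Ghom hn x := fun x =>
    RingQuot.liftAlgHom_mkAlgHom_apply ℚ (Ghom hn) (Grespect hn) x
  have gX : ∀ {a b : Fin n}, a ≠ b → g (X a b) = XQ hn a b := fun {a b} hab => by
    unfold X; rw [gmk, Gx hn hab]
  have gXi : ∀ {a b : Fin n}, a ≠ b → g (Xinv a b) = XQI hn a b := fun {a b} hab => by
    unfold Xinv; rw [gmk, Gxi hn hab]
  have fY : ∀ {i j k : Fin n}, i ≠ j → i ≠ k → j ≠ k →
      f (YQ i j k) = Xinv k i * X k j := fun {i j k} h1 h2 h3 => by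
    unfold YQ; rw [fmk, Fy h1 h2 h3]
  have fT : ∀ {i j k : Fin n}, i ≠ j → i ≠ k → j ≠ k →
      f (TQ i j k) = Xinv j i * (X j k * Xinv i k) := fun {i j k} h1 h2 h3 => by
    unfold TQ; rw [fmk, Ft h1 h2 h3]
  have fTi : ∀ {i j k : Fin n}, i ≠ j → i ≠ k → j ≠ k →
      f (TiQ i j k) = X i k * (Xinv j k * X j i) := fun {i j k} h1 h2 h3 => by
    unfold TiQ; rw [fmk, Fti h1 h2 h3]
  have hcomp1 : g.comp f = AlgHom.id ℚ (RingQuot (RRel n)) := by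
    refine RingQuot.ringQuot_ext' ℚ _ _ ?_
    refine FreeAlgebra.hom_ext ?_
    funext gen
    simp only [Function.comp_apply, AlgHom.comp_apply, AlgHom.id_apply]
    obtain (⟨⟨i, j, k⟩, hd⟩ | ⟨⟨i, j, k⟩, hd⟩ | ⟨⟨i, j, k⟩, hd⟩) := gen
    · have hy : (FreeAlgebra.ι ℚ (Sum.inl ⟨(i, j, k), hd⟩ : RGen n)) = yR i j k := by
        rw [yR, dif_pos hd]
      rw [hy]
      obtain ⟨h1, h2, h3⟩ := hd
      show g (f (YQ i j k)) = YQ i j k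
      rw [fY h1 h2 h3, map_mul, gXi h2.symm, gX h3.symm]
      exact qB1 hn h2.symm h3.symm h1
    · have hy : (FreeAlgebra.ι ℚ (Sum.inr (Sum.inl ⟨(i, j, k), hd⟩) : RGen n))
          = tR i j k := by rw [tR, dif_pos hd]
      rw [hy]
      obtain ⟨h1, h2, h3⟩ := hd
      show g (f (TQ i j k)) = TQ i j k
      rw [fT h1 h2 h3, map_mul, map_mul, gXi h1.symm, gX h3, gXi h2]
      calc XQI hn j i * (XQ hn j k * XQI hn i k)
          = (XQI hn j i * XQ hn j k) * XQI hn i k := (mul_assoc _ _ _).symm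
        _ = YQ i k j * XQI hn i k := by rw [qB1 hn h1.symm h3 h2]
        _ = YQ i k j * (YQ k i j * TQ i k j) := by rw [XQI_eq hn h2 h1.symm h3]
        _ = (YQ i k j * YQ k i j) * TQ i k j := (mul_assoc _ _ _).symm
        _ = TQ i k j := by rw [qYinv i k j h2 h1 h3.symm, one_mul]
        _ = TQ i j k := (qTsymm h1 h2 h3).symm
    · have hy : (FreeAlgebra.ι ℚ (Sum.inr (Sum.inr ⟨(i, j, k), hd⟩) : RGen n))
          = tiR i j k := by rw [tiR, dif_pos hd]
      rw [hy]
      obtain ⟨h1, h2, h3⟩ := hd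
      show g (f (TiQ i j k)) = TiQ i j k
      rw [fTi h1 h2 h3, map_mul, map_mul, gX h2, gXi h3, gX h1.symm]
      rw [qBtri hn h2 h1 h3.symm]
      exact (qTisymm h1 h2 h3).symm
  have hcomp2 : f.comp g = AlgHom.id ℚ (NCPoly n) := by
    refine RingQuot.ringQuot_ext' ℚ _ _ ?_
    refine FreeAlgebra.hom_ext ?_
    funext gen
    simp only [Function.comp_apply, AlgHom.comp_apply, AlgHom.id_apply]
    obtain (⟨⟨i, j⟩, hd⟩ | ⟨⟨i, j⟩, hd⟩) := gen
    · have hx : (FreeAlgebra.ι ℚ (Sum.inl ⟨(i, j), hd⟩ : AGen n)) = xF i j := by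
        rw [xF, dif_pos hd]
      rw [hx]
      show f (g (X i j)) = X i j
      have hti := thrd_ne_left hn i j
      have htj := thrd_ne_right hn i j
      rw [gX hd]
      show f (TiQ i j (thrd hn i j) * YQ i j (thrd hn i j)) = X i j
      rw [map_mul, fTi hd hti.symm htj.symm, fY hd hti.symm htj.symm]
      exact NX1 hd hti htj
    · have hx : (FreeAlgebra.ι ℚ (Sum.inr ⟨(i, j), hd⟩ : AGen n)) = xiF i j := by
        rw [xiF, dif_pos hd]
      rw [hx]
      show f (g (Xinv i j)) = Xinv i j
      have hti := thrd_ne_left hn i j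
      have htj := thrd_ne_right hn i j
      rw [gXi hd]
      show f (YQ j i (thrd hn i j) * TQ i j (thrd hn i j)) = Xinv i j
      rw [map_mul, fY hd.symm htj.symm hti.symm, fT hd hti.symm htj.symm]
      exact NX2 hd hti htj
  have hgf : ∀ x, g (f x) = x := fun x => by
    have := DFunLike.congr_fun hcomp1 x
    simpa using this
  have hfg : ∀ x, f (g x) = x := fun x => by
    have := DFunLike.congr_fun hcomp2 x
    simpa using this
  refine ⟨f, ?_, Function.bijective_iff_has_inverse.mpr ⟨g, hgf, hfg⟩⟩
  intro i j k hij hik hjk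
  exact ⟨fY hij hik hjk, (fT hij hik hjk).trans (mul_assoc _ _ _).symm⟩

end NCPolygon
end
end

section
/- (Additivity of noncommutative angles.) Let n ≥ 3. For any cyclic sequence (i₀,i₁,…,i_ℓ) of distinct elements of [n] with ℓ ≥ 2, one has in 𝒜_n the identity T_{i₀}^{i₁,i_ℓ} = T_{i₀}^{i₁,i₂} + T_{i₀}^{i₂,i₃} + ⋯ + T_{i₀}^{i_{ℓ−1},i_ℓ}. In particular, T_1^{2,n} = T_1^{2,3} + T_1^{3,4} + ⋯ + T_1^{n−1,n}. -/
open scoped Classical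

noncomputable section

namespace NCPolygon

theorem IsCyclicSeq.sublist {n : ℕ} {L l' : List (Fin n)} (h : IsCyclicSeq L)
    (hs : List.Sublist l' L) : IsCyclicSeq l' := by
  obtain ⟨hnd, k, hk⟩ := h
  refine ⟨hnd.sublist hs, ?_⟩
  rcases Nat.eq_zero_or_pos L.length with h0 | hpos
  · have : L = [] := List.length_eq_zero_iff.mp h0
    subst this
    have : l' = [] := List.sublist_nil.mp hs
    exact ⟨0, by simp [this]⟩
  have hk' : (L.rotate (k % L.length)).Pairwise (· < ·) := by rwa [List.rotate_mod]
  rw [List.rotate_eq_drop_append_take (Nat.le_of_lt (Nat.mod_lt _ hpos))] at hk'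
  set m := k % L.length with hm
  have hsplit : List.Sublist l' (L.take m ++ L.drop m) := by rwa [List.take_append_drop]
  obtain ⟨a, b, rfl, ha, hb⟩ := List.sublist_append_iff.mp hsplit
  refine ⟨a.length, ?_⟩
  have hrot : (a ++ b).rotate a.length = b ++ a := by
    rw [List.rotate_eq_drop_append_take (by simp)]
    simp
  rw [hrot]
  exact List.Pairwise.sublist (hb.append ha) hk'

theorem sorted_sublist_finRange {m : ℕ} {l : List (Fin m)} (h : l.Pairwise (· < ·)) :
    List.Sublist l (List.finRange m) := by
  haveI : Std.Antisymm (α := Fin m) (· < ·) := ⟨fun a b h1 h2 => absurd h2 (lt_asymm h1)⟩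
  refine List.sublist_of_subperm_of_pairwise ?_ h (List.pairwise_lt_finRange m)
  exact (h.nodup).subperm (fun x _ => List.mem_finRange x)

theorem map_sorted_sublist_ofFn {m : ℕ} {α : Type*} (f : Fin m → α) {l : List (Fin m)}
    (h : l.Pairwise (· < ·)) : List.Sublist (l.map f) (List.ofFn f) := by
  rw [List.ofFn_eq_map]
  exact (sorted_sublist_finRange h).map f

theorem X_mul_Xinv {n : ℕ} {i j : Fin n} (h : i ≠ j) : X i j * Xinv i j = 1 := by
  have := RingQuot.mkAlgHom_rel ℚ (ARel.mul_inv h)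
  simpa [X, Xinv, map_mul, map_one] using this

theorem Xinv_mul_X {n : ℕ} {i j : Fin n} (h : i ≠ j) : Xinv i j * X i j = 1 := by
  have := RingQuot.mkAlgHom_rel ℚ (ARel.inv_mul h)
  simpa [X, Xinv, map_mul, map_one] using this

theorem X_exchange {n : ℕ} {i j k l : Fin n} (h : IsCyclicSeq [i, j, k, l]) :
    X j l = X j k * Xinv i k * X i l + X j i * Xinv k i * X k l := by
  have := RingQuot.mkAlgHom_rel ℚ (ARel.exchange h)
  simpa [X, Xinv, map_mul, map_add] using this

theorem Tang_add {n : ℕ} {i j k l : Fin n} (h : IsCyclicSeq [i, j, k, l]) :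
    Tang i j l = Tang i j k + Tang i k l := by
  have hnd := h.1
  simp only [List.nodup_cons, List.mem_cons, List.mem_singleton, List.not_mem_nil] at hnd
  have hij : i ≠ j := fun e => by simp [e] at hnd
  have hil : i ≠ l := fun e => by simp [e] at hnd
  have h1 : X i l * Xinv i l = 1 := X_mul_Xinv hil
  have h2 : Xinv j i * X j i = 1 := Xinv_mul_X hij.symm
  simp only [Tang, X_exchange h, mul_add, add_mul]
  congr 1
  · calc Xinv j i * (X j k * Xinv i k * X i l) * Xinv i l
        = Xinv j i * X j k * Xinv i k * (X i l * Xinv i l) := by noncomm_ring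
      _ = Xinv j i * X j k * Xinv i k := by rw [h1, mul_one]
  · calc Xinv j i * (X j i * Xinv k i * X k l) * Xinv i l
        = (Xinv j i * X j i) * (Xinv k i * X k l * Xinv i l) := by noncomm_ring
      _ = Xinv k i * X k l * Xinv i l := by rw [h2, one_mul]

/-- **Additivity of noncommutative angles.** For any cyclic sequence
`(i₀, i₁, …, i_ℓ)` of distinct vertices (`ℓ ≥ 2`),
`T_{i₀}^{i₁, i_ℓ} = Σ_{s=1}^{ℓ-1} T_{i₀}^{i_s, i_{s+1}}` in `𝒜_n`. -/
theorem angle_additivity (n : ℕ) (hn : 3 ≤ n) (l : ℕ) (hl : 2 ≤ l)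
    (f : Fin (l + 1) → Fin n) (hf : IsCyclicSeq (List.ofFn f)) :
    Tang (f 0) (f 1) (f (Fin.last l)) =
      ∑ s ∈ Finset.univ.filter (fun s : Fin l => 1 ≤ (s : ℕ)),
        Tang (f 0) (f s.castSucc) (f s.succ) := by
  induction l, hl using Nat.le_induction with
  | base =>
    have : Finset.univ.filter (fun s : Fin 2 => 1 ≤ (s : ℕ)) = {1} := by decide
    rw [this, Finset.sum_singleton]
    congr 1 <;> decide
  | succ l hl ih =>
    set g : Fin (l + 1) → Fin n := fun s => f s.castSucc with hg
    have hsub : List.Sublist (List.ofFn g) (List.ofFn f) := by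
      rw [List.ofFn_succ' f]
      simpa [List.concat_eq_append, hg] using List.sublist_append_left _ _
    have hcg : IsCyclicSeq (List.ofFn g) := hf.sublist hsub
    have hquad : IsCyclicSeq
        [f 0, f 1, f ((Fin.last l).castSucc), f (Fin.last (l + 1))] := by
      refine hf.sublist ?_
      have hsorted : ([0, 1, (Fin.last l).castSucc, Fin.last (l + 1)] :
          List (Fin (l + 2))).Pairwise (· < ·) := by
        simp only [List.pairwise_cons, List.mem_cons, List.mem_singleton,
          List.not_mem_nil, List.Pairwise.nil]
        refine ⟨?_, ?_, ?_, ?_⟩ <;>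
          simp_all [Fin.ext_iff, Fin.last] <;> intro a h <;> rw [Fin.lt_def] <;>
          simp -failIfUnchanged only [Fin.coe_ofNat_eq_mod, Nat.zero_mod, Nat.one_mod] <;> omega
      have := map_sorted_sublist_ofFn f hsorted
      simpa using this
    have key := Tang_add hquad
    have IH := ih g hcg
    have hg0 : g 0 = f 0 := rfl
    have hg1 : g 1 = f 1 := congrArg f (Fin.ext (by simp; omega))
    have hglast : g (Fin.last l) = f ((Fin.last l).castSucc) := rfl
    rw [hg0, hg1, hglast] at IH
    rw [key, IH]
    rw [Finset.sum_filter, Finset.sum_filter, Fin.sum_univ_castSucc]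
    have hlast : (1 : ℕ) ≤ ((Fin.last l : Fin (l + 1)) : ℕ) := by simp; omega
    rw [if_pos hlast, Fin.succ_last]
    congr 1

end NCPolygon
end
end
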